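/- Let μ be a Lévy measure with μ(ℝ)=∞ satisfying condition A with β > 1. For k ≥ 0 and λ > 0 set I_k(t,λ) = ∫_ℝ |y|^k e^{−λ t ψ^U(y)} dy. Then there exists c = c(k,λ) > 0 such that I_k(t,λ) ≤ c·ρ_t^{k+1} for all t ∈ (0,1], where ρ_t = inf{ξ>0 : Re ψ(ξ) ≥ 1/t}. -/

import Mathlib

open MeasureTheory Real Set
open scoped ENNReal NNReal Topology

/-- A Lévy measure on `ℝ`: a Borel measure with `∫ min(1, u²) μ(du) < ∞`. -/
def IsLevyMeasure (μ : Measure ℝ) : Prop :=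
  ∫⁻ u, ENNReal.ofReal (min 1 (u ^ 2)) ∂μ < ⊤

/-- `ψ^L(ξ) = ∫_{|ξu|<1} (ξu)² μ(du)`. -/
noncomputable def psiL (μ : Measure ℝ) (ξ : ℝ) : ℝ :=
  (∫⁻ u in {u : ℝ | |ξ * u| < 1}, ENNReal.ofReal ((ξ * u) ^ 2) ∂μ).toReal

/-- `ψ^U(ξ) = ∫ min((ξu)², 1) μ(du)`. -/
noncomputable def psiU (μ : Measure ℝ) (ξ : ℝ) : ℝ :=
  (∫⁻ u, ENNReal.ofReal (min ((ξ * u) ^ 2) 1) ∂μ).toReal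

/-- `Re ψ(ξ) = ∫ (1 - cos(ξu)) μ(du)`. -/
noncomputable def rePsi (μ : Measure ℝ) (ξ : ℝ) : ℝ :=
  (∫⁻ u, ENNReal.ofReal (1 - Real.cos (ξ * u)) ∂μ).toReal

/-- `ρ_t = inf{ξ > 0 : Re ψ(ξ) ≥ 1/t}`. -/
noncomputable def rho (μ : Measure ℝ) (t : ℝ) : ℝ :=
  sInf {ξ : ℝ | 0 < ξ ∧ 1 / t ≤ rePsi μ ξ}

/-! ### Auxiliary definitions -/

/-- The upper symbol at the `lintegral` level. -/
noncomputable def UL (μ : Measure ℝ) (ξ : ℝ) : ℝ≥0∞ :=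
  ∫⁻ u, ENNReal.ofReal (min ((ξ * u) ^ 2) 1) ∂μ

/-- The lower symbol at the `lintegral` level. -/
noncomputable def LL (μ : Measure ℝ) (ξ : ℝ) : ℝ≥0∞ :=
  ∫⁻ u in {u : ℝ | |ξ * u| < 1}, ENNReal.ofReal ((ξ * u) ^ 2) ∂μ

/-- The doubling constant. -/
noncomputable def gam (β : ℝ) : ℝ := 4 * β / (4 * β - 3)

lemma psiU_eq (μ : Measure ℝ) (ξ : ℝ) : psiU μ ξ = (UL μ ξ).toReal := rfl
lemma psiL_eq (μ : Measure ℝ) (ξ : ℝ) : psiL μ ξ = (LL μ ξ).toReal := rfl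

lemma measurable_UL_integrand (ξ : ℝ) :
    Measurable fun u : ℝ => ENNReal.ofReal (min ((ξ * u) ^ 2) 1) := by
  apply Measurable.ennreal_ofReal; fun_prop

lemma measurable_LL_integrand (ξ : ℝ) :
    Measurable fun u : ℝ => ENNReal.ofReal ((ξ * u) ^ 2) := by
  apply Measurable.ennreal_ofReal; fun_prop

lemma measurableSet_LL (ξ : ℝ) : MeasurableSet {u : ℝ | |ξ * u| < 1} := by
  have : Continuous fun u : ℝ => |ξ * u| := by fun_prop
  exact (isOpen_lt this continuous_const).measurableSet

lemma UL_lt_top (μ : Measure ℝ) (hμ : IsLevyMeasure μ) (ξ : ℝ) : UL μ ξ < ⊤ := by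
  have hpt : ∀ u : ℝ, ENNReal.ofReal (min ((ξ * u) ^ 2) 1)
      ≤ ENNReal.ofReal (1 + ξ ^ 2) * ENNReal.ofReal (min 1 (u ^ 2)) := by
    intro u
    rw [← ENNReal.ofReal_mul (by positivity)]
    apply ENNReal.ofReal_le_ofReal
    rcases le_or_gt (u ^ 2) 1 with h | h
    · rw [min_eq_right h]
      calc min ((ξ * u) ^ 2) 1 ≤ (ξ * u) ^ 2 := min_le_left _ _
        _ = ξ ^ 2 * u ^ 2 := by ring
        _ ≤ (1 + ξ ^ 2) * u ^ 2 := by nlinarith [sq_nonneg u]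
    · rw [min_eq_left h.le]
      calc min ((ξ * u) ^ 2) 1 ≤ 1 := min_le_right _ _
        _ ≤ (1 + ξ ^ 2) * 1 := by nlinarith [sq_nonneg ξ]
  calc UL μ ξ ≤ ∫⁻ u, ENNReal.ofReal (1 + ξ ^ 2) * ENNReal.ofReal (min 1 (u ^ 2)) ∂μ :=
        lintegral_mono hpt
    _ = ENNReal.ofReal (1 + ξ ^ 2) * ∫⁻ u, ENNReal.ofReal (min 1 (u ^ 2)) ∂μ := by
        rw [lintegral_const_mul _ (by apply Measurable.ennreal_ofReal; fun_prop)]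
    _ < ⊤ := ENNReal.mul_lt_top ENNReal.ofReal_lt_top hμ

lemma LL_le_UL (μ : Measure ℝ) (ξ : ℝ) : LL μ ξ ≤ UL μ ξ := by
  calc LL μ ξ ≤ ∫⁻ u in {u : ℝ | |ξ * u| < 1}, ENNReal.ofReal (min ((ξ * u) ^ 2) 1) ∂μ := by
        apply setLIntegral_mono (measurable_UL_integrand ξ)
        intro u hu
        apply ENNReal.ofReal_le_ofReal
        have hu' : |ξ * u| < 1 := hu
        rw [min_eq_left]
        nlinarith [abs_nonneg (ξ * u), sq_abs (ξ * u)]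
    _ ≤ UL μ ξ := lintegral_mono' Measure.restrict_le_self le_rfl

lemma UL_mono (μ : Measure ℝ) {ξ₁ ξ₂ : ℝ} (h : |ξ₁| ≤ |ξ₂|) : UL μ ξ₁ ≤ UL μ ξ₂ := by
  apply lintegral_mono
  intro u
  apply ENNReal.ofReal_le_ofReal
  apply min_le_min _ le_rfl
  rw [← sq_abs (ξ₁ * u), ← sq_abs (ξ₂ * u), abs_mul, abs_mul]
  apply pow_le_pow_left₀ (by positivity)
  exact mul_le_mul_of_nonneg_right h (abs_nonneg u)

lemma psiU_nonneg (μ : Measure ℝ) (ξ : ℝ) : 0 ≤ psiU μ ξ := ENNReal.toReal_nonneg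

lemma psiU_mono (μ : Measure ℝ) (hμ : IsLevyMeasure μ) {ξ₁ ξ₂ : ℝ} (h : |ξ₁| ≤ |ξ₂|) :
    psiU μ ξ₁ ≤ psiU μ ξ₂ :=
  ENNReal.toReal_mono (UL_lt_top μ hμ ξ₂).ne (UL_mono μ h)

/-- `Re ψ ≤ 2 ψ^U`. -/
lemma rePsi_le_two_psiU (μ : Measure ℝ) (hμ : IsLevyMeasure μ) (ξ : ℝ) :
    rePsi μ ξ ≤ 2 * psiU μ ξ := by
  have hpt : ∀ u : ℝ, ENNReal.ofReal (1 - Real.cos (ξ * u))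
      ≤ 2 * ENNReal.ofReal (min ((ξ * u) ^ 2) 1) := by
    intro u
    have h2 : (2 : ℝ≥0∞) = ENNReal.ofReal 2 := by norm_num
    rw [h2, ← ENNReal.ofReal_mul (by norm_num)]
    apply ENNReal.ofReal_le_ofReal
    have hc1 : Real.cos (ξ * u) ≤ 1 := Real.cos_le_one _
    have hc2 : 1 - Real.cos (ξ * u) ≤ (ξ * u) ^ 2 / 2 := by nlinarith [Real.one_sub_sq_div_two_le_cos (x := ξ * u)]
    rcases le_or_gt ((ξ * u) ^ 2) 1 with h | h
    · rw [min_eq_left h]; nlinarith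
    · rw [min_eq_right h.le]; nlinarith [Real.neg_one_le_cos (ξ * u)]
  have : (∫⁻ u, ENNReal.ofReal (1 - Real.cos (ξ * u)) ∂μ) ≤ 2 * UL μ ξ := by
    calc (∫⁻ u, ENNReal.ofReal (1 - Real.cos (ξ * u)) ∂μ)
        ≤ ∫⁻ u, 2 * ENNReal.ofReal (min ((ξ * u) ^ 2) 1) ∂μ := lintegral_mono hpt
      _ = 2 * UL μ ξ := lintegral_const_mul _ (measurable_UL_integrand ξ)
  have h2top : (2 : ℝ≥0∞) * UL μ ξ ≠ ⊤ :=
    (ENNReal.mul_lt_top (by norm_num) (UL_lt_top μ hμ ξ)).ne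
  calc rePsi μ ξ ≤ ((2 : ℝ≥0∞) * UL μ ξ).toReal := ENNReal.toReal_mono h2top this
    _ = 2 * psiU μ ξ := by rw [ENNReal.toReal_mul]; norm_num [psiU_eq]

lemma RL_lt_top (μ : Measure ℝ) (hμ : IsLevyMeasure μ) (ξ : ℝ) :
    (∫⁻ u, ENNReal.ofReal (1 - Real.cos (ξ * u)) ∂μ) < ⊤ := by
  have hpt : ∀ u : ℝ, ENNReal.ofReal (1 - Real.cos (ξ * u))
      ≤ 2 * ENNReal.ofReal (min ((ξ * u) ^ 2) 1) := by
    intro u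
    have h2 : (2 : ℝ≥0∞) = ENNReal.ofReal 2 := by norm_num
    rw [h2, ← ENNReal.ofReal_mul (by norm_num)]
    apply ENNReal.ofReal_le_ofReal
    have hc2 : 1 - Real.cos (ξ * u) ≤ (ξ * u) ^ 2 / 2 := by nlinarith [Real.one_sub_sq_div_two_le_cos (x := ξ * u)]
    rcases le_or_gt ((ξ * u) ^ 2) 1 with h | h
    · rw [min_eq_left h]; nlinarith
    · rw [min_eq_right h.le]; nlinarith [Real.neg_one_le_cos (ξ * u)]
  calc (∫⁻ u, ENNReal.ofReal (1 - Real.cos (ξ * u)) ∂μ)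
      ≤ ∫⁻ u, 2 * ENNReal.ofReal (min ((ξ * u) ^ 2) 1) ∂μ := lintegral_mono hpt
    _ = 2 * UL μ ξ := lintegral_const_mul _ (measurable_UL_integrand ξ)
    _ < ⊤ := ENNReal.mul_lt_top (by norm_num) (UL_lt_top μ hμ ξ)

/-- `(2/π²) ψ^L ≤ Re ψ`. -/
lemma psiL_le_rePsi (μ : Measure ℝ) (hμ : IsLevyMeasure μ) (ξ : ℝ) :
    (2 / π ^ 2) * psiL μ ξ ≤ rePsi μ ξ := by
  have hpt : ∀ u ∈ {u : ℝ | |ξ * u| < 1},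
      ENNReal.ofReal (2 / π ^ 2) * ENNReal.ofReal ((ξ * u) ^ 2)
        ≤ ENNReal.ofReal (1 - Real.cos (ξ * u)) := by
    intro u hu
    rw [← ENNReal.ofReal_mul (by positivity)]
    apply ENNReal.ofReal_le_ofReal
    have hu' : |ξ * u| < 1 := hu
    have hpi : |ξ * u| ≤ π := by nlinarith [Real.pi_gt_three]
    have := Real.cos_le_one_sub_mul_cos_sq hpi
    linarith
  have hkey : ENNReal.ofReal (2 / π ^ 2) * LL μ ξ
      ≤ ∫⁻ u, ENNReal.ofReal (1 - Real.cos (ξ * u)) ∂μ := by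
    calc ENNReal.ofReal (2 / π ^ 2) * LL μ ξ
        = ∫⁻ u in {u : ℝ | |ξ * u| < 1},
            ENNReal.ofReal (2 / π ^ 2) * ENNReal.ofReal ((ξ * u) ^ 2) ∂μ :=
          (lintegral_const_mul _ (measurable_LL_integrand ξ)).symm
      _ ≤ ∫⁻ u in {u : ℝ | |ξ * u| < 1}, ENNReal.ofReal (1 - Real.cos (ξ * u)) ∂μ :=
          setLIntegral_mono (by apply Measurable.ennreal_ofReal; fun_prop) hpt
      _ ≤ ∫⁻ u, ENNReal.ofReal (1 - Real.cos (ξ * u)) ∂μ :=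
          lintegral_mono' Measure.restrict_le_self le_rfl
  have := ENNReal.toReal_mono (RL_lt_top μ hμ ξ).ne hkey
  rw [ENNReal.toReal_mul, ENNReal.toReal_ofReal (by positivity)] at this
  exact this

lemma gam_pos {β : ℝ} (hβ : 1 < β) : 0 < gam β := by
  unfold gam
  have h1 : (0:ℝ) < 4 * β - 3 := by linarith
  positivity

lemma one_lt_gam {β : ℝ} (hβ : 1 < β) : 1 < gam β := by
  unfold gam
  rw [lt_div_iff₀ (by linarith)]
  linarith

/-- doubling: `γ ψ^U(ξ) ≤ ψ^U(2ξ)`. -/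
lemma psiU_doubling (μ : Measure ℝ) (hμ : IsLevyMeasure μ) {β : ℝ} (hβ : 1 < β)
    (hA : ∀ ξ : ℝ, psiU μ ξ ≤ β * psiL μ ξ) (ξ : ℝ) :
    gam β * psiU μ ξ ≤ psiU μ (2 * ξ) := by
  -- pointwise inequality
  have hpt : ∀ u : ℝ, ENNReal.ofReal (min ((ξ * u) ^ 2) 1)
      + ({u : ℝ | |2 * ξ * u| < 1}.indicator
          (fun u => ENNReal.ofReal (3 / 4) * ENNReal.ofReal ((2 * ξ * u) ^ 2)) u)
      ≤ ENNReal.ofReal (min ((2 * ξ * u) ^ 2) 1) := by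
    intro u
    by_cases hu : u ∈ {u : ℝ | |2 * ξ * u| < 1}
    · rw [indicator_of_mem hu, ← ENNReal.ofReal_mul (by norm_num),
        ← ENNReal.ofReal_add (le_min (by positivity) zero_le_one) (by positivity)]
      apply ENNReal.ofReal_le_ofReal
      have hu' : |2 * ξ * u| < 1 := hu
      have h4 : (2 * ξ * u) ^ 2 < 1 := by
        nlinarith [abs_nonneg (2 * ξ * u), sq_abs (2 * ξ * u)]
      have h1 : (ξ * u) ^ 2 < 1 := by nlinarith
      rw [min_eq_left h1.le, min_eq_left h4.le]; ring_nf; nlinarith [sq_nonneg (ξ * u)]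
    · rw [indicator_of_notMem hu, add_zero]
      apply ENNReal.ofReal_le_ofReal
      apply min_le_min _ le_rfl
      nlinarith [sq_nonneg (ξ * u)]
  have hlin : UL μ ξ + ENNReal.ofReal (3 / 4) * LL μ (2 * ξ) ≤ UL μ (2 * ξ) := by
    have hmeas : Measurable fun u : ℝ =>
        ({u : ℝ | |2 * ξ * u| < 1}.indicator
          (fun u => ENNReal.ofReal (3 / 4) * ENNReal.ofReal ((2 * ξ * u) ^ 2)) u) :=
      (Measurable.indicator ((measurable_LL_integrand (2 * ξ)).const_mul _)
        (measurableSet_LL (2 * ξ)))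
    calc UL μ ξ + ENNReal.ofReal (3 / 4) * LL μ (2 * ξ)
        = ∫⁻ u, (ENNReal.ofReal (min ((ξ * u) ^ 2) 1)
            + ({u : ℝ | |2 * ξ * u| < 1}.indicator
                (fun u => ENNReal.ofReal (3 / 4) * ENNReal.ofReal ((2 * ξ * u) ^ 2)) u)) ∂μ := by
          rw [lintegral_add_left (measurable_UL_integrand ξ),
            lintegral_indicator (measurableSet_LL (2 * ξ)),
            lintegral_const_mul _ (measurable_LL_integrand (2 * ξ))]
          rfl
      _ ≤ UL μ (2 * ξ) := lintegral_mono hpt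
  -- to real numbers
  have hLfin : LL μ (2 * ξ) < ⊤ := lt_of_le_of_lt (LL_le_UL μ _) (UL_lt_top μ hμ _)
  have hreal : psiU μ ξ + (3 / 4) * psiL μ (2 * ξ) ≤ psiU μ (2 * ξ) := by
    have := ENNReal.toReal_mono (UL_lt_top μ hμ (2 * ξ)).ne hlin
    rw [ENNReal.toReal_add (UL_lt_top μ hμ ξ).ne
        (ENNReal.mul_lt_top ENNReal.ofReal_lt_top hLfin).ne,
      ENNReal.toReal_mul, ENNReal.toReal_ofReal (by norm_num)] at this
    exact this
  have hA2 := hA (2 * ξ)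
  have hb0 : (0 : ℝ) < β := by linarith
  have hb3 : (0 : ℝ) < 4 * β - 3 := by linarith
  have h1β := mul_le_mul_of_nonneg_left hreal hb0.le
  unfold gam
  rw [div_mul_eq_mul_div, div_le_iff₀ hb3]
  nlinarith [psiU_nonneg μ (2 * ξ), hA2]

/-- The scaling exponent. -/
noncomputable def alp (β : ℝ) : ℝ := Real.logb 2 (gam β)

/-- The constant in the main bound. -/
noncomputable def Ccon (β lam : ℝ) (k : ℕ) : ℝ :=
  Real.exp (lam / (2 * gam β)) *
    ∫ s : ℝ, |s| ^ k * Real.exp (-(lam / (2 * gam β)) * |s| ^ alp β)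

lemma alp_pos {β : ℝ} (hβ : 1 < β) : 0 < alp β := Real.logb_pos one_lt_two (one_lt_gam hβ)

lemma two_rpow_alp {β : ℝ} (hβ : 1 < β) : (2 : ℝ) ^ alp β = gam β :=
  Real.rpow_logb two_pos (by norm_num) (gam_pos hβ)

lemma psiU_iter (μ : Measure ℝ) (hμ : IsLevyMeasure μ) {β : ℝ} (hβ : 1 < β)
    (hA : ∀ ξ : ℝ, psiU μ ξ ≤ β * psiL μ ξ) (ξ : ℝ) (n : ℕ) :
    gam β ^ n * psiU μ ξ ≤ psiU μ (2 ^ n * ξ) := by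
  induction n with
  | zero => simp
  | succ n ih =>
    have h1 : gam β ^ (n + 1) * psiU μ ξ = gam β * (gam β ^ n * psiU μ ξ) := by ring
    rw [h1]
    calc gam β * (gam β ^ n * psiU μ ξ) ≤ gam β * psiU μ (2 ^ n * ξ) :=
          mul_le_mul_of_nonneg_left ih (gam_pos hβ).le
      _ ≤ psiU μ (2 * (2 ^ n * ξ)) := psiU_doubling μ hμ hβ hA _
      _ = psiU μ (2 ^ (n + 1) * ξ) := by congr 1; ring

lemma scale_bound (μ : Measure ℝ) (hμ : IsLevyMeasure μ) {β : ℝ} (hβ : 1 < β)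
    (hA : ∀ ξ : ℝ, psiU μ ξ ≤ β * psiL μ ξ) {ξ₀ y : ℝ} (hξ₀ : 0 < ξ₀) (hy : ξ₀ ≤ |y|) :
    psiU μ ξ₀ * ((|y| / ξ₀) ^ alp β / gam β) ≤ psiU μ y := by
  have hγ0 : 0 < gam β := gam_pos hβ
  have hα : 0 < alp β := alp_pos hβ
  set r : ℝ := |y| / ξ₀ with hrdef
  have hr1 : 1 ≤ r := (one_le_div hξ₀).mpr hy
  have hr0 : 0 < r := lt_of_lt_of_le one_pos hr1
  set n : ℕ := ⌊Real.logb 2 r⌋₊ with hndef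
  have hlogr : 0 ≤ Real.logb 2 r := Real.logb_nonneg one_lt_two hr1
  have h2n : (2 : ℝ) ^ n ≤ r := by
    calc (2 : ℝ) ^ n = (2 : ℝ) ^ ((n : ℝ)) := (Real.rpow_natCast 2 n).symm
      _ ≤ (2 : ℝ) ^ (Real.logb 2 r) :=
          Real.rpow_le_rpow_of_exponent_le one_le_two (Nat.floor_le hlogr)
      _ = r := Real.rpow_logb two_pos (by norm_num) hr0
  have h2n1 : r ≤ (2 : ℝ) ^ (n + 1) := by
    have h1 : Real.logb 2 r < ((n : ℝ) + 1) := Nat.lt_floor_add_one _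
    calc r = (2 : ℝ) ^ (Real.logb 2 r) := (Real.rpow_logb two_pos (by norm_num) hr0).symm
      _ ≤ (2 : ℝ) ^ (((n + 1 : ℕ) : ℝ)) :=
          Real.rpow_le_rpow_of_exponent_le one_le_two (by push_cast; linarith)
      _ = (2 : ℝ) ^ (n + 1) := Real.rpow_natCast 2 (n + 1)
  have hmono : psiU μ (2 ^ n * ξ₀) ≤ psiU μ y := by
    apply psiU_mono μ hμ
    rw [abs_of_pos (by positivity)]
    calc (2 : ℝ) ^ n * ξ₀ ≤ r * ξ₀ := mul_le_mul_of_nonneg_right h2n hξ₀.le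
      _ = |y| := by rw [hrdef]; field_simp
  have hiter := psiU_iter μ hμ hβ hA ξ₀ n
  have hpow : r ^ alp β / gam β ≤ gam β ^ n := by
    rw [div_le_iff₀ hγ0]
    have h1 : r ^ alp β ≤ ((2 : ℝ) ^ (n + 1)) ^ alp β :=
      Real.rpow_le_rpow hr0.le h2n1 hα.le
    have h2 : ((2 : ℝ) ^ (n + 1)) ^ alp β = gam β ^ (n + 1) := by
      rw [← Real.rpow_natCast 2 (n + 1), ← Real.rpow_mul (by norm_num), mul_comm,
        Real.rpow_mul (by norm_num), two_rpow_alp hβ, Real.rpow_natCast]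
    calc r ^ alp β ≤ gam β ^ (n + 1) := h2 ▸ h1
      _ = gam β ^ n * gam β := pow_succ _ _
  calc psiU μ ξ₀ * (r ^ alp β / gam β) ≤ psiU μ ξ₀ * gam β ^ n :=
        mul_le_mul_of_nonneg_left hpow (psiU_nonneg μ ξ₀)
    _ = gam β ^ n * psiU μ ξ₀ := by ring
    _ ≤ psiU μ (2 ^ n * ξ₀) := hiter
    _ ≤ psiU μ y := hmono

lemma integrable_aux {c α : ℝ} (k : ℕ) (hc : 0 < c) (hα : 0 < α) :
    Integrable (fun s : ℝ => |s| ^ k * Real.exp (-c * |s| ^ α)) := by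
  have hcont : Continuous fun s : ℝ => |s| ^ k * Real.exp (-c * |s| ^ α) := by
    apply Continuous.mul (by fun_prop)
    apply Real.continuous_exp.comp
    exact continuous_const.mul (continuous_abs.rpow_const fun x => Or.inr hα.le)
  set m : ℕ := ⌈(k + 2 : ℝ) / α⌉₊ with hm
  set C : ℝ := 2 + 2 * (Nat.factorial m) / c ^ m with hC
  have hC2 : (2 : ℝ) ≤ C := by
    rw [hC]
    have : (0:ℝ) ≤ 2 * (Nat.factorial m) / c ^ m := by positivity
    linarith
  have hbound : ∀ s : ℝ, ‖|s| ^ k * Real.exp (-c * |s| ^ α)‖ ≤ C * (1 + s ^ 2)⁻¹ := by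
    intro s
    set r : ℝ := |s| with hr
    have hr0 : 0 ≤ r := abs_nonneg s
    have hs2 : s ^ 2 = r ^ 2 := (sq_abs s).symm
    rw [norm_of_nonneg (by positivity), ← div_eq_mul_inv, le_div_iff₀ (by positivity), hs2]
    have hexp1 : Real.exp (-c * r ^ α) ≤ 1 := by
      rw [Real.exp_le_one_iff]
      have : 0 ≤ r ^ α := Real.rpow_nonneg hr0 α
      nlinarith
    rcases le_or_gt r 1 with hcase | hcase
    · have h1 : r ^ k ≤ 1 := pow_le_one₀ hr0 hcase
      have h2 : r ^ 2 ≤ 1 := by nlinarith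
      have h3 : r ^ k * Real.exp (-c * r ^ α) ≤ 1 :=
        mul_le_one₀ h1 (Real.exp_pos _).le hexp1
      have h4 : 0 ≤ r ^ k * Real.exp (-c * r ^ α) := by positivity
      nlinarith
    · have hr1 : 1 ≤ r := hcase.le
      have hrpos : 0 < r := lt_trans one_pos hcase
      have hrapos : 0 < r ^ α := Real.rpow_pos_of_pos hrpos α
      -- exp lower bound
      have hfac : (c * r ^ α) ^ m / (Nat.factorial m) ≤ Real.exp (c * r ^ α) := by
        calc (c * r ^ α) ^ m / (Nat.factorial m)
            ≤ ∑ i ∈ Finset.range (m + 1), (c * r ^ α) ^ i / (Nat.factorial i) := by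
              apply Finset.single_le_sum (f := fun i => (c * r ^ α) ^ i / (Nat.factorial i))
                (fun i _ => by positivity) (Finset.self_mem_range_succ m)
          _ ≤ Real.exp (c * r ^ α) := by
              simpa using Real.sum_le_exp_of_nonneg (by positivity) (m + 1)
      have hexp2 : Real.exp (-c * r ^ α) ≤ (Nat.factorial m) / (c * r ^ α) ^ m := by
        rw [neg_mul, Real.exp_neg]
        have hpos : (0:ℝ) < (c * r ^ α) ^ m / (Nat.factorial m) := by positivity
        have h2 := one_div_le_one_div_of_le hpos hfac
        rw [one_div_div] at h2
        calc (Real.exp (c * r ^ α))⁻¹ = 1 / Real.exp (c * r ^ α) := (one_div _).symm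
          _ ≤ (Nat.factorial m) / (c * r ^ α) ^ m := h2
      have hmα : ((k : ℝ) + 2) ≤ α * m := by
        have h5 := Nat.le_ceil ((k + 2 : ℝ) / α)
        rw [div_le_iff₀ hα] at h5
        push_cast at h5 ⊢
        nlinarith [h5]
      have hrm : r ^ (k + 2) ≤ (r ^ α) ^ m := by
        have h1 : r ^ (((k + 2 : ℕ)) : ℝ) ≤ r ^ (α * m) :=
          Real.rpow_le_rpow_of_exponent_le hr1 (by push_cast; linarith)
        rw [Real.rpow_natCast] at h1
        rw [← Real.rpow_natCast (r ^ α) m, ← Real.rpow_mul hr0]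
        exact h1
      have hklek2 : r ^ k ≤ r ^ (k + 2) := pow_le_pow_right₀ hr1 (by omega)
      have hstep1 : r ^ k * (1 + r ^ 2) ≤ 2 * r ^ (k + 2) := by
        have h6 : r ^ k * r ^ 2 = r ^ (k + 2) := by rw [← pow_add]
        nlinarith [hklek2, pow_nonneg hr0 k]
      calc r ^ k * Real.exp (-c * r ^ α) * (1 + r ^ 2)
          = (r ^ k * (1 + r ^ 2)) * Real.exp (-c * r ^ α) := by ring
        _ ≤ (2 * r ^ (k + 2)) * ((Nat.factorial m) / (c * r ^ α) ^ m) :=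
            mul_le_mul hstep1 hexp2 (Real.exp_pos _).le (by positivity)
        _ ≤ (2 * (r ^ α) ^ m) * ((Nat.factorial m) / (c * r ^ α) ^ m) := by
            apply mul_le_mul_of_nonneg_right (by nlinarith [hrm]) (by positivity)
        _ = 2 * (Nat.factorial m) / c ^ m := by
            rw [mul_pow]
            have hne : ((r ^ α) ^ m : ℝ) ≠ 0 := (pow_pos hrapos m).ne'
            field_simp
        _ ≤ C := by rw [hC]; linarith
  have hint : Integrable (fun s : ℝ => C * (1 + s ^ 2)⁻¹) :=
    integrable_inv_one_add_sq.const_mul C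
  exact hint.mono' hcont.aestronglyMeasurable (Filter.Eventually.of_forall hbound)

lemma Ccon_nonneg {β lam : ℝ} (hβ : 1 < β) (hlam : 0 < lam) (k : ℕ) : 0 ≤ Ccon β lam k := by
  unfold Ccon
  apply mul_nonneg (Real.exp_nonneg _)
  apply integral_nonneg
  intro s
  positivity

/-- The key bound: if `ψ^U(ξ₀) ≥ 1/(2t)`, then `I_k ≤ (Ccon + 1) ξ₀^{k+1}`. -/
lemma key_bound (μ : Measure ℝ) (hμ : IsLevyMeasure μ) {β : ℝ} (hβ : 1 < β)
    (hA : ∀ ξ : ℝ, psiU μ ξ ≤ β * psiL μ ξ) (k : ℕ) {lam t ξ₀ : ℝ}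
    (hlam : 0 < lam) (ht : 0 < t) (hξ₀ : 0 < ξ₀) (hψ : 1 / (2 * t) ≤ psiU μ ξ₀) :
    (∫ y : ℝ, |y| ^ k * Real.exp (-lam * t * psiU μ y))
      ≤ (Ccon β lam k + 1) * ξ₀ ^ (k + 1) := by
  have hγ0 : 0 < gam β := gam_pos hβ
  have hα : 0 < alp β := alp_pos hβ
  set c : ℝ := lam / (2 * gam β) with hcdef
  have hc : 0 < c := by rw [hcdef]; positivity
  set h : ℝ → ℝ := fun s => |s| ^ k * Real.exp (-c * |s| ^ alp β) with hhdef
  have hInt : Integrable h := integrable_aux k hc hα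
  set g : ℝ → ℝ := fun y => Real.exp c * ξ₀ ^ k * h (ξ₀⁻¹ * y) with hgdef
  have hg_int : Integrable g := by
    apply Integrable.const_mul
    exact (MeasureTheory.integrable_comp_mul_left_iff h (inv_ne_zero hξ₀.ne')).mpr hInt
  have habs : ∀ y : ℝ, |ξ₀⁻¹ * y| = |y| / ξ₀ := by
    intro y
    rw [abs_mul, abs_inv, abs_of_pos hξ₀]
    ring
  have hgy : ∀ y : ℝ, g y = Real.exp c * (|y| ^ k * Real.exp (-c * (|y| / ξ₀) ^ alp β)) := by
    intro y
    rw [hgdef]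
    simp only [hhdef, habs y]
    rw [div_pow]
    field_simp
  have hfg : ∀ y : ℝ, |y| ^ k * Real.exp (-lam * t * psiU μ y) ≤ g y := by
    intro y
    rw [hgy y]
    set q : ℝ := (|y| / ξ₀) ^ alp β with hqdef
    have hq0 : 0 ≤ q := Real.rpow_nonneg (by positivity) _
    rcases lt_or_ge (|y|) ξ₀ with hcase | hcase
    · have hq1 : q ≤ 1 := by
        rw [hqdef]
        exact Real.rpow_le_one (by positivity) ((div_le_one hξ₀).mpr hcase.le) hα.le
      have h1 : Real.exp (-lam * t * psiU μ y) ≤ 1 := by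
        rw [Real.exp_le_one_iff]
        nlinarith [mul_nonneg (mul_nonneg hlam.le ht.le) (psiU_nonneg μ y)]
      have h2 : (1 : ℝ) ≤ Real.exp c * Real.exp (-c * q) := by
        rw [← Real.exp_add]
        apply Real.one_le_exp
        nlinarith
      have h3 : 0 ≤ |y| ^ k := by positivity
      nlinarith [mul_le_mul_of_nonneg_left h1 h3, mul_le_mul_of_nonneg_left h2 h3,
        Real.exp_pos (-c * q)]
    · have hscale := scale_bound μ hμ hβ hA hξ₀ hcase
      have h5 : 1 / (2 * t) * (q / gam β) ≤ psiU μ ξ₀ * (q / gam β) :=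
        mul_le_mul_of_nonneg_right hψ (by positivity)
      have h6 : 1 / (2 * t) * (q / gam β) ≤ psiU μ y := by
        calc 1 / (2 * t) * (q / gam β) ≤ psiU μ ξ₀ * (q / gam β) := h5
          _ = psiU μ ξ₀ * (q / gam β) := rfl
          _ ≤ psiU μ y := by rw [hqdef] at *; exact hscale
      have h7 : c * q ≤ lam * t * psiU μ y := by
        have h8 : lam * t * (1 / (2 * t) * (q / gam β)) = c * q := by
          rw [hcdef]; field_simp
        rw [← h8]
        exact mul_le_mul_of_nonneg_left h6 (by positivity)
      have h9 : Real.exp (-lam * t * psiU μ y) ≤ Real.exp (-c * q) := by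
        apply Real.exp_le_exp.mpr
        nlinarith
      have h10 : 0 ≤ |y| ^ k := by positivity
      have h11 : (1:ℝ) ≤ Real.exp c := Real.one_le_exp hc.le
      nlinarith [mul_le_mul_of_nonneg_left h9 h10,
        mul_le_mul_of_nonneg_right h11 (mul_nonneg h10 (Real.exp_pos (-c * q)).le)]
  have hmono := integral_mono_of_nonneg (μ := (volume : Measure ℝ))
    (f := fun y : ℝ => |y| ^ k * Real.exp (-lam * t * psiU μ y)) (g := g)
    (Filter.Eventually.of_forall fun y => by positivity) hg_int
    (Filter.Eventually.of_forall hfg)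
  have hval : (∫ y : ℝ, g y) = Ccon β lam k * ξ₀ ^ (k + 1) := by
    rw [hgdef]
    simp only
    rw [MeasureTheory.integral_const_mul]
    rw [MeasureTheory.Measure.integral_comp_inv_mul_left h ξ₀]
    rw [abs_of_pos hξ₀, smul_eq_mul]
    unfold Ccon
    rw [← hcdef, ← hhdef]
    ring
  calc (∫ y : ℝ, |y| ^ k * Real.exp (-lam * t * psiU μ y)) ≤ ∫ y : ℝ, g y := hmono
    _ = Ccon β lam k * ξ₀ ^ (k + 1) := hval
    _ ≤ (Ccon β lam k + 1) * ξ₀ ^ (k + 1) := by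
        apply mul_le_mul_of_nonneg_right (by linarith) (by positivity)

lemma exists_rePsi_ge (μ : Measure ℝ) (hμ : IsLevyMeasure μ) {β : ℝ} (hβ : 1 < β)
    (hA : ∀ ξ : ℝ, psiU μ ξ ≤ β * psiL μ ξ) (hz : μ {u : ℝ | u ≠ 0} = ⊤)
    {t : ℝ} (ht : 0 < t) : ∃ ξ : ℝ, 0 < ξ ∧ 1 / t ≤ rePsi μ ξ := by
  have hβ0 : (0:ℝ) < β := by linarith
  set M : ℝ := π ^ 2 * β / 2 * (1 / t) with hMdef
  have hπ := Real.pi_pos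
  have hM : 0 < M := by rw [hMdef]; positivity
  set A : ℕ → Set ℝ := fun n => {u : ℝ | 1 / ((n : ℝ) + 1) ≤ |u|} with hAdef
  have hAmeas : ∀ n, MeasurableSet (A n) :=
    fun n => (isClosed_le continuous_const continuous_abs).measurableSet
  have hAmono : Monotone A := by
    intro a b hab u hu
    simp only [hAdef, mem_setOf_eq] at *
    have hab' : ((a : ℝ) + 1) ≤ ((b : ℝ) + 1) := by exact_mod_cast by omega
    have := one_div_le_one_div_of_le (by positivity : (0:ℝ) < (a:ℝ) + 1) hab'
    linarith
  have hunion : ⋃ n, A n = {u : ℝ | u ≠ 0} := by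
    ext u
    simp only [hAdef, mem_iUnion, mem_setOf_eq]
    constructor
    · rintro ⟨n, hn⟩ h0
      rw [h0, abs_zero] at hn
      have : (0:ℝ) < 1 / ((n:ℝ) + 1) := by positivity
      linarith
    · intro h0
      have h1 : 0 < |u| := abs_pos.mpr h0
      obtain ⟨n, hn⟩ := exists_nat_gt (1 / |u|)
      refine ⟨n, ?_⟩
      rw [div_le_iff₀ (by positivity)]
      rw [div_lt_iff₀ h1] at hn
      nlinarith
  have hsup : ⨆ n, μ (A n) = ⊤ := by
    rw [← (hAmono.directed_le).measure_iUnion, hunion, hz]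
  have hex : ∃ n, ENNReal.ofReal M < μ (A n) := by
    rw [← lt_iSup_iff, hsup]
    exact ENNReal.ofReal_lt_top
  obtain ⟨n, hn⟩ := hex
  set ξ : ℝ := (n : ℝ) + 1 with hξdef
  have hξpos : 0 < ξ := by positivity
  have hUL : μ (A n) ≤ UL μ ξ := by
    have h1 : ∀ u ∈ A n, (1 : ℝ≥0∞) ≤ ENNReal.ofReal (min ((ξ * u) ^ 2) 1) := by
      intro u hu
      have hu' : 1 / ((n : ℝ) + 1) ≤ |u| := hu
      have h2 : (1:ℝ) ≤ (ξ * u) ^ 2 := by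
        have h3 : (1:ℝ) ≤ ξ * |u| := by
          rw [div_le_iff₀ (by positivity : (0:ℝ) < (n:ℝ) + 1)] at hu'
          rw [hξdef]; nlinarith
        calc (1:ℝ) ≤ (ξ * |u|) ^ 2 := by nlinarith
          _ = (ξ * u) ^ 2 := by rw [mul_pow, mul_pow, sq_abs]
      rw [min_eq_right h2]
      simp
    calc μ (A n) = ∫⁻ _ in A n, 1 ∂μ := by rw [setLIntegral_one]
      _ ≤ ∫⁻ u in A n, ENNReal.ofReal (min ((ξ * u) ^ 2) 1) ∂μ :=
          setLIntegral_mono (measurable_UL_integrand ξ) h1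
      _ ≤ UL μ ξ := lintegral_mono' Measure.restrict_le_self le_rfl
  have hpsiU : M ≤ psiU μ ξ := by
    rw [psiU_eq]
    calc M = (ENNReal.ofReal M).toReal := (ENNReal.toReal_ofReal hM.le).symm
      _ ≤ (UL μ ξ).toReal :=
          ENNReal.toReal_mono (UL_lt_top μ hμ ξ).ne (le_trans hn.le hUL)
  refine ⟨ξ, hξpos, ?_⟩
  have h4 := psiL_le_rePsi μ hμ ξ
  have h5 := hA ξ
  have h6 : psiU μ ξ / β ≤ psiL μ ξ := by rw [div_le_iff₀ hβ0]; linarith [mul_comm β (psiL μ ξ)]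
  have h7 : (2 / π ^ 2) * (M / β) ≤ rePsi μ ξ := by
    calc (2 / π ^ 2) * (M / β) ≤ (2 / π ^ 2) * (psiU μ ξ / β) := by
          gcongr
      _ ≤ (2 / π ^ 2) * psiL μ ξ := mul_le_mul_of_nonneg_left h6 (by positivity)
      _ ≤ rePsi μ ξ := h4
  have h8 : (2 / π ^ 2) * (M / β) = 1 / t := by rw [hMdef]; field_simp
  linarith [h8 ▸ h7]

lemma degenerate_case (μ : Measure ℝ) (hμ : IsLevyMeasure μ) {β : ℝ} (hβ : 1 < β)
    (hA : ∀ ξ : ℝ, psiU μ ξ ≤ β * psiL μ ξ) (hpos : μ {u : ℝ | u ≠ 0} ≠ 0)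
    (hfin : μ {u : ℝ | u ≠ 0} ≠ ⊤) : False := by
  have hβ0 : (0:ℝ) < β := by linarith
  have hUL1pos : 0 < UL μ 1 := by
    rw [UL, lintegral_pos_iff_support (measurable_UL_integrand 1)]
    have hsupp : (Function.support fun u : ℝ => ENNReal.ofReal (min ((1 * u) ^ 2) 1))
        = {u : ℝ | u ≠ 0} := by
      ext u
      simp only [Function.mem_support, mem_setOf_eq, ne_eq, one_mul]
      constructor
      · intro h h0
        apply h
        rw [h0]
        norm_num
      · intro h0 h
        rw [ENNReal.ofReal_eq_zero] at h
        have h1 : 0 < u ^ 2 := by positivity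
        have h2 : (0:ℝ) < min (u ^ 2) 1 := lt_min h1 one_pos
        linarith
    rw [hsupp]
    exact pos_iff_ne_zero.mpr hpos
  have hpsiU1 : 0 < psiU μ 1 := ENNReal.toReal_pos hUL1pos.ne' (UL_lt_top μ hμ 1).ne
  set ε : ℝ := psiU μ 1 / β with hεdef
  have hε : 0 < ε := by positivity
  set F : ℕ → ℝ → ℝ≥0∞ := fun n u =>
    {u : ℝ | |(n : ℝ) * u| < 1}.indicator (fun u => ENNReal.ofReal (((n : ℝ) * u) ^ 2)) u
    with hFdef
  have hFmeas : ∀ n, Measurable (F n) :=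
    fun n => (measurable_LL_integrand _).indicator (measurableSet_LL _)
  set bound : ℝ → ℝ≥0∞ := fun u => {u : ℝ | u ≠ 0}.indicator (fun _ => 1) u with hbdef
  have hF0 : ∀ n : ℕ, F n (0:ℝ) = 0 := by
    intro n
    show ({u : ℝ | |(n:ℝ) * u| < 1}).indicator
      (fun u => ENNReal.ofReal (((n:ℝ) * u) ^ 2)) 0 = 0
    rw [indicator_of_mem (by simp : (0:ℝ) ∈ {u : ℝ | |(n:ℝ) * u| < 1})]
    simp
  have hbm : ∀ n, F n ≤ᵐ[μ] bound := by
    intro n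
    apply Filter.Eventually.of_forall
    intro u
    rcases eq_or_ne u 0 with h0 | h0
    · subst h0
      rw [hF0]
      exact zero_le
    · have hb1 : bound u = 1 := by rw [hbdef]; simp [indicator_of_mem, h0]
      rw [hb1]
      show ({u : ℝ | |(n:ℝ) * u| < 1}).indicator
        (fun u => ENNReal.ofReal (((n:ℝ) * u) ^ 2)) u ≤ 1
      by_cases hm : u ∈ {u : ℝ | |(n : ℝ) * u| < 1}
      · rw [indicator_of_mem hm]
        apply ENNReal.ofReal_le_one.mpr
        have hm' : |(n : ℝ) * u| < 1 := hm
        nlinarith [sq_abs ((n:ℝ) * u), abs_nonneg ((n:ℝ) * u)]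
      · rw [indicator_of_notMem hm]
        exact zero_le
  have hbfin : ∫⁻ u, bound u ∂μ ≠ ⊤ := by
    rw [hbdef]
    rw [lintegral_indicator (by
      exact (isOpen_ne_fun continuous_id continuous_const).measurableSet)]
    simp only [setLIntegral_one]
    exact hfin
  have hlim : ∀ u : ℝ, Filter.Tendsto (fun n => F n u) Filter.atTop (𝓝 0) := by
    intro u
    rcases eq_or_ne u 0 with h0 | h0
    · subst h0
      simp only [hF0]
      exact tendsto_const_nhds
    · have h1 : 0 < |u| := abs_pos.mpr h0
      obtain ⟨N, hN⟩ := exists_nat_ge (1 / |u|)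
      apply Filter.Tendsto.congr' _ tendsto_const_nhds
      filter_upwards [Filter.eventually_ge_atTop N] with n hn
      have : u ∉ {u : ℝ | |(n : ℝ) * u| < 1} := by
        simp only [mem_setOf_eq, not_lt, abs_mul, Nat.abs_cast]
        rw [div_le_iff₀ h1] at hN
        have : (N : ℝ) ≤ (n : ℝ) := by exact_mod_cast hn
        nlinarith
      exact (indicator_of_notMem this _).symm
  have htendsto : Filter.Tendsto (fun n : ℕ => LL μ ((n : ℝ))) Filter.atTop (𝓝 0) := by
    have h2 : ∀ n : ℕ, LL μ ((n : ℝ)) = ∫⁻ u, F n u ∂μ := by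
      intro n
      rw [LL, hFdef]
      rw [lintegral_indicator (measurableSet_LL _)]
    simp only [h2]
    have := MeasureTheory.tendsto_lintegral_of_dominated_convergence bound hFmeas hbm hbfin
      (Filter.Eventually.of_forall hlim)
    simpa using this
  have hev : ∀ᶠ n : ℕ in Filter.atTop, LL μ ((n : ℝ)) < ENNReal.ofReal ε :=
    htendsto.eventually_lt_const (by simp [ENNReal.ofReal_pos, hε])
  obtain ⟨N, hN1, hN2⟩ := (hev.and (Filter.eventually_ge_atTop 1)).exists
  have hpsiL : psiL μ ((N : ℝ)) < ε := by
    rw [psiL_eq]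
    exact ENNReal.toReal_lt_of_lt_ofReal hN1
  have hmono : psiU μ 1 ≤ psiU μ ((N : ℝ)) := by
    apply psiU_mono μ hμ
    rw [abs_one, Nat.abs_cast]
    exact_mod_cast hN2
  have hAN := hA ((N : ℝ))
  have : psiU μ ((N : ℝ)) < β * ε := by
    calc psiU μ ((N : ℝ)) ≤ β * psiL μ ((N : ℝ)) := hAN
      _ < β * ε := by apply mul_lt_mul_of_pos_left hpsiL hβ0
  rw [hεdef] at this
  have hβε : β * (psiU μ 1 / β) = psiU μ 1 := by field_simp
  linarith [hβε ▸ this]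

lemma psiU_eq_zero (μ : Measure ℝ) (hz : μ {u : ℝ | u ≠ 0} = 0) (ξ : ℝ) : psiU μ ξ = 0 := by
  rw [psiU_eq, UL]
  have : (∫⁻ u, ENNReal.ofReal (min ((ξ * u) ^ 2) 1) ∂μ) = 0 := by
    rw [lintegral_eq_zero_iff (measurable_UL_integrand ξ)]
    rw [Filter.EventuallyEq, ae_iff]
    apply measure_mono_null _ hz
    intro u hu
    simp only [mem_setOf_eq] at *
    intro h0
    apply hu
    rw [h0]
    norm_num
  rw [this]
  simp

lemma not_integrable_zero (μ : Measure ℝ) (hz : μ {u : ℝ | u ≠ 0} = 0)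
    (k : ℕ) {lam t : ℝ} :
    ¬ Integrable (fun y : ℝ => |y| ^ k * Real.exp (-lam * t * psiU μ y)) volume := by
  intro hI
  have heq : (fun y : ℝ => |y| ^ k * Real.exp (-lam * t * psiU μ y))
      = fun y : ℝ => |y| ^ k := by
    funext y
    rw [psiU_eq_zero μ hz y]
    simp
  rw [heq] at hI
  have h2 : IntegrableOn (fun y : ℝ => |y| ^ k) (Ioi 1) volume := hI.integrableOn
  have h3 : IntegrableOn (fun _ : ℝ => (1 : ℝ)) (Ioi 1) volume := by
    apply h2.mono' aestronglyMeasurable_const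
    rw [ae_restrict_iff' measurableSet_Ioi]
    apply Filter.Eventually.of_forall
    intro y hy
    have hy1 : (1:ℝ) ≤ |y| := by
      rw [abs_of_pos (lt_trans one_pos hy)]
      exact le_of_lt hy
    rw [norm_one]
    exact one_le_pow₀ hy1
  rw [integrableOn_const_iff] at h3
  rcases h3 with h | h
  · norm_num at h
  · rw [Real.volume_Ioi] at h
    exact (lt_irrefl _ h).elim

theorem integral_bound_Ik (μ : Measure ℝ) (hμ : IsLevyMeasure μ)
    (hinf : μ Set.univ = ⊤) (β : ℝ) (hβ : 1 < β)
    (hA : ∀ ξ : ℝ, psiU μ ξ ≤ β * psiL μ ξ)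
    (k : ℕ) (lam : ℝ) (hlam : 0 < lam) :
    ∃ c > 0, ∀ t ∈ Set.Ioc (0 : ℝ) 1,
      (∫ y : ℝ, |y| ^ k * Real.exp (-lam * t * psiU μ y)) ≤ c * rho μ t ^ (k + 1) := by
  refine ⟨Ccon β lam k + 1, by linarith [Ccon_nonneg hβ hlam k], ?_⟩
  intro t ht
  obtain ⟨ht0, _⟩ := ht
  have hC0 : 0 ≤ Ccon β lam k := Ccon_nonneg hβ hlam k
  have hrho0 : 0 ≤ rho μ t := Real.sInf_nonneg (fun x hx => hx.1.le)
  by_cases hz : μ {u : ℝ | u ≠ 0} = ⊤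
  · -- main case
    have hne : {ξ : ℝ | 0 < ξ ∧ 1 / t ≤ rePsi μ ξ}.Nonempty := by
      obtain ⟨ξ, h1, h2⟩ := exists_rePsi_ge μ hμ hβ hA hz ht0
      exact ⟨ξ, h1, h2⟩
    have hbound : ∀ ε > (0:ℝ), (∫ y : ℝ, |y| ^ k * Real.exp (-lam * t * psiU μ y))
        ≤ (Ccon β lam k + 1) * (rho μ t + ε) ^ (k + 1) := by
      intro ε hε
      obtain ⟨ξ₀, hξ₀S, hξ₀lt⟩ := Real.lt_sInf_add_pos hne hε
      have h1 : 1 / (2 * t) ≤ psiU μ ξ₀ := by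
        have h2 := rePsi_le_two_psiU μ hμ ξ₀
        have h3 := hξ₀S.2
        have h4 : 1 / (2 * t) = 1 / t / 2 := by ring
        linarith
      have h5 := key_bound μ hμ hβ hA k hlam ht0 hξ₀S.1 h1
      calc (∫ y : ℝ, |y| ^ k * Real.exp (-lam * t * psiU μ y))
          ≤ (Ccon β lam k + 1) * ξ₀ ^ (k + 1) := h5
        _ ≤ (Ccon β lam k + 1) * (rho μ t + ε) ^ (k + 1) := by
            apply mul_le_mul_of_nonneg_left _ (by linarith)
            exact pow_le_pow_left₀ hξ₀S.1.le hξ₀lt.le _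
    have htend : Filter.Tendsto (fun ε : ℝ => (Ccon β lam k + 1) * (rho μ t + ε) ^ (k + 1))
        (nhdsWithin 0 (Set.Ioi 0)) (𝓝 ((Ccon β lam k + 1) * rho μ t ^ (k + 1))) := by
      have hcont : Continuous fun ε : ℝ => (Ccon β lam k + 1) * (rho μ t + ε) ^ (k + 1) := by
        fun_prop
      have h6 := hcont.tendsto 0
      simp only [add_zero] at h6
      exact h6.mono_left nhdsWithin_le_nhds
    refine ge_of_tendsto htend ?_
    filter_upwards [self_mem_nhdsWithin] with ε hε using hbound ε hε
  · rcases eq_or_ne (μ {u : ℝ | u ≠ 0}) 0 with hz0 | hzpos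
    · rw [integral_undef (not_integrable_zero μ hz0 k)]
      positivity
    · exact (degenerate_case μ hμ hβ hA hzpos hz).elim
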